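/- Let ℓ(ŷ, y) = -φ(ŷ)y + Φ(ŷ) be a GLM-type loss with φ 1-Lipschitz, and suppose g̃, g* are square-integrable functions of (X,W) with smoothed versions h̃(x) = E[g̃(X,W)|X=x] and h*(x) = E[g*(X,W)|X=x]. Then for any functions f̂, f* of X: E[ℓ(f̂(X), g*(X,W)) - ℓ(f*(X), g*(X,W))] - E[ℓ(f̂(X), g̃(X,W)) - ℓ(f*(X), g̃(X,W))] ≤ ‖f̂ - f*‖₂ · ‖h̃ - h*‖₂. -/

import Mathlib

open MeasureTheory

lemma l2_mul_integrable {Ω : Type*} {m : MeasurableSpace Ω} {μ : Measure Ω}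
    {f g : Ω → ℝ} (hf : MemLp f 2 μ) (hg : MemLp g 2 μ) :
    Integrable (fun ω => f ω * g ω) μ := by
  refine Integrable.mono ((hf.integrable_sq.add hg.integrable_sq).div_const 2)
    (hf.1.mul hg.1) (Filter.Eventually.of_forall fun ω => ?_)
  have h2 : (0:ℝ) ≤ (f ω ^ 2 + g ω ^ 2) / 2 := by positivity
  simp only [Real.norm_eq_abs, Pi.add_apply]
  rw [abs_of_nonneg h2, abs_mul]
  nlinarith [sq_abs (f ω), sq_abs (g ω), sq_nonneg (|f ω| - |g ω|)]

lemma l2_cauchy_schwarz {Ω : Type*} {m : MeasurableSpace Ω} {μ : Measure Ω}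
    {f g : Ω → ℝ} (hf : MemLp f 2 μ) (hg : MemLp g 2 μ) :
    ∫ ω, f ω * g ω ∂μ ≤ Real.sqrt (∫ ω, f ω ^ 2 ∂μ) * Real.sqrt (∫ ω, g ω ^ 2 ∂μ) := by
  have h2 : ENNReal.ofReal (2:ℝ) = 2 := by simp [ENNReal.ofReal_ofNat]
  have key := integral_mul_le_Lp_mul_Lq_of_nonneg (μ := μ)
    (Real.holderConjugate_iff_eq_conjExponent (by norm_num) |>.mpr (by norm_num))
    (f := fun ω => |f ω|) (g := fun ω => |g ω|)
    (Filter.Eventually.of_forall fun ω => abs_nonneg _)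
    (Filter.Eventually.of_forall fun ω => abs_nonneg _)
    (h2 ▸ hf.abs) (h2 ▸ hg.abs)
  simp only [Real.rpow_two, sq_abs] at key
  rw [← Real.sqrt_eq_rpow, ← Real.sqrt_eq_rpow] at key
  have habs : Integrable (fun ω => |f ω| * |g ω|) μ := l2_mul_integrable hf.abs hg.abs
  refine le_trans (integral_mono (l2_mul_integrable hf hg) habs fun ω =>
    (le_abs_self _).trans_eq (abs_mul _ _)) key

lemma memLp_two_condexp {Ω : Type*} {m : MeasurableSpace Ω} {μ : Measure Ω}
    [IsFiniteMeasure μ] {mX : MeasurableSpace Ω} (hmX : mX ≤ m) {g : Ω → ℝ}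
    (hg : MemLp g 2 μ) : MemLp (μ[g|mX]) 2 μ := by
  set gL := hg.toLp g with hgL
  have hae : (condExpL2 ℝ ℝ hmX gL : Ω → ℝ) =ᵐ[μ] μ[g|mX] := by
    refine ae_eq_condExp_of_forall_setIntegral_eq hmX (hg.integrable one_le_two)
      (fun s hs hμs => integrableOn_condExpL2_of_measure_ne_top hmX hμs.ne gL)
      (fun s hs hμs => ?_)
      ((aestronglyMeasurable_condExpL2 hmX gL))
    refine (integral_condExpL2_eq (𝕜 := ℝ) hmX gL hs hμs.ne).trans ?_
    exact integral_congr_ae (ae_restrict_of_ae hg.coeFn_toLp)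
  exact MemLp.ae_eq hae (Lp.memLp _)

theorem stmt_15 {Ω : Type*} {m : MeasurableSpace Ω} (μ : Measure Ω) [IsProbabilityMeasure μ]
    (mX : MeasurableSpace Ω) (hmX : mX ≤ m)
    (φ Φ : ℝ → ℝ) (hφ : ∀ u v : ℝ, |φ u - φ v| ≤ |u - v|)
    (gtil gstar : Ω → ℝ) (hgtil : MemLp gtil 2 μ) (hgstar : MemLp gstar 2 μ)
    (fhat fstar : Ω → ℝ)
    (hfhatm : StronglyMeasurable[mX] fhat) (hfstarm : StronglyMeasurable[mX] fstar)
    (hfhat : MemLp fhat 2 μ) (hfstar : MemLp fstar 2 μ) :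
    ∫ ω, (((-(φ (fhat ω)) * gstar ω + Φ (fhat ω)) - (-(φ (fstar ω)) * gstar ω + Φ (fstar ω)))
        - ((-(φ (fhat ω)) * gtil ω + Φ (fhat ω)) - (-(φ (fstar ω)) * gtil ω + Φ (fstar ω)))) ∂μ
      ≤ Real.sqrt (∫ ω, (fhat ω - fstar ω) ^ 2 ∂μ)
          * Real.sqrt (∫ ω, ((μ[gtil | mX]) ω - (μ[gstar | mX]) ω) ^ 2 ∂μ) := by
  have hφlip : LipschitzWith 1 φ := LipschitzWith.of_dist_le_mul fun u v => by
    simpa [Real.dist_eq] using hφ u v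
  set ψ : Ω → ℝ := fun ω => φ (fhat ω) - φ (fstar ω) with hψdef
  set G : Ω → ℝ := fun ω => gtil ω - gstar ω with hGdef
  have hψm : StronglyMeasurable[mX] ψ :=
    ((hφlip.continuous.comp_stronglyMeasurable hfhatm).sub
      (hφlip.continuous.comp_stronglyMeasurable hfstarm))
  have hψmem : MemLp ψ 2 μ := by
    refine MemLp.of_le (hfhat.sub hfstar) (hψm.mono hmX).aestronglyMeasurable
      (Filter.Eventually.of_forall fun ω => ?_)
    simpa [Real.norm_eq_abs] using hφ (fhat ω) (fstar ω)
  have hGmem : MemLp G 2 μ := hgtil.sub hgstar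
  have hint : Integrable (fun ω => ψ ω * G ω) μ := l2_mul_integrable hψmem hGmem
  have hGint : Integrable G μ := hGmem.integrable one_le_two
  have hμtrim : SigmaFinite (μ.trim hmX) := by infer_instance
  have h1 : ∫ ω, (((-(φ (fhat ω)) * gstar ω + Φ (fhat ω)) - (-(φ (fstar ω)) * gstar ω + Φ (fstar ω)))
        - ((-(φ (fhat ω)) * gtil ω + Φ (fhat ω)) - (-(φ (fstar ω)) * gtil ω + Φ (fstar ω)))) ∂μ
      = ∫ ω, ψ ω * G ω ∂μ := integral_congr_ae (Filter.Eventually.of_forall fun ω => by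
        simp only [hψdef, hGdef]; ring)
  have h2 : ∫ ω, ψ ω * G ω ∂μ = ∫ ω, ψ ω * (μ[G | mX]) ω ∂μ := by
    have ht := integral_condExp hmX (μ := μ) (f := fun ω => ψ ω * G ω)
    rw [← ht]
    refine integral_congr_ae ?_
    have hpull := condExp_mul_of_stronglyMeasurable_left (μ := μ) hψm hint hGint
    filter_upwards [hpull] with ω hω
    exact hω
  have hcesub : (μ[G | mX]) =ᵐ[μ] fun ω => (μ[gtil | mX]) ω - (μ[gstar | mX]) ω :=
    condExp_sub (hgtil.integrable one_le_two) (hgstar.integrable one_le_two) mX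
  have h3 : ∫ ω, ψ ω * (μ[G | mX]) ω ∂μ
      = ∫ ω, ψ ω * ((μ[gtil | mX]) ω - (μ[gstar | mX]) ω) ∂μ := by
    refine integral_congr_ae ?_
    filter_upwards [hcesub] with ω hω
    rw [hω]
  have hHmem : MemLp (fun ω => (μ[gtil | mX]) ω - (μ[gstar | mX]) ω) 2 μ :=
    (memLp_two_condexp hmX hgtil).sub (memLp_two_condexp hmX hgstar)
  have hCS := l2_cauchy_schwarz hψmem hHmem
  rw [h1, h2, h3]
  refine hCS.trans (mul_le_mul_of_nonneg_right ?_ (Real.sqrt_nonneg _))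
  refine Real.sqrt_le_sqrt (integral_mono hψmem.integrable_sq
    ((hfhat.sub hfstar).integrable_sq) fun ω => ?_)
  have hb := hφ (fhat ω) (fstar ω)
  calc ψ ω ^ 2 = |ψ ω| ^ 2 := (sq_abs _).symm
    _ ≤ |fhat ω - fstar ω| ^ 2 := pow_le_pow_left₀ (abs_nonneg _) hb 2
    _ = (fhat ω - fstar ω) ^ 2 := sq_abs _
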